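/- Let ⋆ be a semistar operation on an integral domain D. The following are equivalent: (i) D is a ((⋆̄)_f, ⋆_f)-domain [respectively: a (⋆̄, ⋆)-domain]; (ii) for all E, F ∈ f(D) [respectively: E, F ∈ F̄(D)], (E ∩ F)^⋆ = E^⋆ ∩ F^⋆; (iii) for all E, F ∈ f(D) [respectively: E ∈ F̄(D), F ∈ f(D)], (E :_D F)^⋆ = (E^⋆ :_{D^⋆} F); (iv) for each E ∈ f(D) [respectively: E ∈ F̄(D)] and each nonzero x ∈ K, (E :_D xD)^⋆ = (E^⋆ :_{D^⋆} xD). -/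

import Mathlib

open Submodule

namespace Semistar

/-- A semistar operation on an integral domain `D` with quotient field `K`:
a map on `D`-submodules of `K` satisfying the semistar axioms on nonzero submodules. -/
structure SemistarOp (D K : Type*) [CommRing D] [Field K] [Algebra D K] where
  star : Submodule D K → Submodule D K
  star_smul_mul : ∀ x : K, x ≠ 0 → ∀ E : Submodule D K, E ≠ ⊥ →
    star (span D {x} * E) = span D {x} * star E
  star_mono : ∀ E F : Submodule D K, E ≠ ⊥ → F ≠ ⊥ → E ≤ F → star E ≤ star F
  le_star : ∀ E : Submodule D K, E ≠ ⊥ → E ≤ star E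
  star_star : ∀ E : Submodule D K, E ≠ ⊥ → star (star E) = star E

variable {D K : Type*} [CommRing D] [Field K] [Algebra D K]

/-- The finite-type semistar operation `⋆_f` associated to `⋆`. -/
def finStar (t : Submodule D K → Submodule D K) : Submodule D K → Submodule D K :=
  fun E => ⨆ F ∈ {F : Submodule D K | F ≠ ⊥ ∧ F.FG ∧ F ≤ E}, t F

/-- The image in `K` of an ideal of `D`. -/
def idealToK (I : Ideal D) : Submodule D K :=
  Submodule.map (Algebra.linearMap D K) I

/-- `I` is a quasi-`⋆`-ideal: a nonzero ideal of `D` with `I^⋆ ∩ D = I`. -/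
def IsQuasiIdeal (t : Submodule D K → Submodule D K) (I : Ideal D) : Prop :=
  I ≠ ⊥ ∧ t (idealToK I) ⊓ 1 = idealToK I

/-- `M` is a quasi-`⋆`-maximal ideal: maximal among quasi-`⋆`-ideals. -/
def IsQuasiMaximal (t : Submodule D K → Submodule D K) (M : Ideal D) : Prop :=
  IsQuasiIdeal t M ∧ ∀ J : Ideal D, IsQuasiIdeal t J → M ≤ J → M = J

/-- The localization `E·D_M` of a submodule `E` of `K` at (the complement of) an ideal `M`. -/
def locAt (M : Ideal D) (E : Submodule D K) : Submodule D K where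
  carrier := {x : K | ∃ s ∈ Submonoid.closure ((M : Set D)ᶜ), s • x ∈ E}
  add_mem' := by
    rintro x y ⟨s, hs, hsx⟩ ⟨t, ht, hty⟩
    refine ⟨s * t, mul_mem hs ht, ?_⟩
    have h1 : (s * t) • x ∈ E := by rw [mul_comm, mul_smul]; exact E.smul_mem t hsx
    have h2 : (s * t) • y ∈ E := by rw [mul_smul]; exact E.smul_mem s hty
    rw [smul_add]; exact E.add_mem h1 h2
  zero_mem' := ⟨1, Submonoid.one_mem _, by simp⟩
  smul_mem' := by
    rintro c x ⟨s, hs, hsx⟩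
    exact ⟨s, hs, by rw [smul_comm]; exact E.smul_mem c hsx⟩

/-- The spectral semistar operation `⋆̃` associated to `⋆`, defined by
`E^⋆̃ = ⋂ { E·D_M : M quasi-`⋆_f`-maximal }`. -/
def tildeStar (s : SemistarOp D K) : Submodule D K → Submodule D K :=
  fun E => ⨅ M ∈ {M : Ideal D | IsQuasiMaximal (finStar s.star) M}, locAt M E

/-- The localizing system `F^⋆` of ideals `I` with `I^⋆ = D^⋆`. -/
def starLS (s : SemistarOp D K) : Set (Ideal D) :=
  {I : Ideal D | I ≠ ⊥ ∧ s.star (idealToK I) = s.star 1}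

/-- The stable semistar operation `⋆̄` associated to `⋆`:
`E^⋆̄ = ⋃ {(E : J) : J ∈ F^⋆}`. -/
def barStar (s : SemistarOp D K) : Submodule D K → Submodule D K :=
  fun E => ⨆ J ∈ starLS s, E / idealToK J

/-- `I` is `⋆`-invertible: `(I·I⁻¹)^⋆ = D^⋆`. -/
def IsStarInvertible (t : Submodule D K → Submodule D K) (I : Submodule D K) : Prop :=
  t (I * (1 / I)) = t 1

/-- `D` is a `⋆`-domain: every nonzero finitely generated `D`-submodule of `K`
is `⋆`-invertible. -/
def IsStarDomain (t : Submodule D K → Submodule D K) : Prop :=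
  ∀ I : Submodule D K, I ≠ ⊥ → I.FG → IsStarInvertible t I

/-- `D` is a Prüfer `⋆`-multiplication domain: every nonzero finitely generated
ideal of `D` is `⋆_f`-invertible. -/
def IsPMD (t : Submodule D K → Submodule D K) : Prop :=
  ∀ I : Submodule D K, I ≠ ⊥ → I.FG → I ≤ 1 → IsStarInvertible (finStar t) I

/-- `D` is a P⋆MD for the semistar operation `s`. -/
abbrev IsPStarMD (s : SemistarOp D K) : Prop := IsPMD s.star

/-- Equality of two semistar operations (as maps on nonzero submodules):
`D` is a `(∗₁, ∗₂)`-domain. -/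
def StarEq (t₁ t₂ : Submodule D K → Submodule D K) : Prop :=
  ∀ E : Submodule D K, E ≠ ⊥ → t₁ E = t₂ E

/-- `⋆` is a.b. -/
def IsAB (t : Submodule D K → Submodule D K) : Prop :=
  ∀ E : Submodule D K, E ≠ ⊥ → E.FG → ∀ F G : Submodule D K, F ≠ ⊥ → G ≠ ⊥ →
    t (E * F) ≤ t (E * G) → t F ≤ t G

/-- `⋆` is e.a.b. -/
def IsEAB (t : Submodule D K → Submodule D K) : Prop :=
  ∀ E F G : Submodule D K, E ≠ ⊥ → E.FG → F ≠ ⊥ → F.FG → G ≠ ⊥ → G.FG →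
    t (E * F) ≤ t (E * G) → t F ≤ t G

/-- `D` is quasi-`⋆`-integrally closed: `D^⋆ = ⋃ {(F^⋆ : F^⋆) : F ∈ f(D)}`. -/
def IsQuasiStarIntegrallyClosed (t : Submodule D K → Submodule D K) : Prop :=
  (t 1 : Set K) = ⋃ F ∈ {F : Submodule D K | F ≠ ⊥ ∧ F.FG}, ((t F / t F : Submodule D K) : Set K)

/-- The submodule `S` of `K` is integrally closed in `K`. -/
def IsIntegrallyClosedIn (S : Submodule D K) : Prop :=
  ∀ x : K, (∃ p : Polynomial K, p.Monic ∧ (∀ i, p.coeff i ∈ S) ∧ Polynomial.eval x p = 0) → x ∈ S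

/-- `D` is `⋆`-Noetherian: ACC on quasi-`⋆`-ideals. -/
def IsStarNoetherian (t : Submodule D K → Submodule D K) : Prop :=
  ∀ c : ℕ → Ideal D, (∀ n, IsQuasiIdeal t (c n)) → Monotone c →
    ∃ n, ∀ m, n ≤ m → c m = c n

/-- `D` is `⋆`-extracoherent. -/
def IsExtraCoherent (t : Submodule D K → Submodule D K) : Prop :=
  ∀ E F : Submodule D K, E ≠ ⊥ → E.FG → F ≠ ⊥ → F.FG → E ⊓ F ≠ ⊥ →
    ∃ J : Submodule D K, J ≠ ⊥ ∧ J.FG ∧ J ≤ E ⊓ F ∧ t J = t E ⊓ t F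

/-- `D` is truly `⋆`-coherent. -/
def IsTrulyCoherent (t : Submodule D K → Submodule D K) : Prop :=
  ∀ E F : Submodule D K, E ≠ ⊥ → E.FG → F ≠ ⊥ → F.FG → E ⊓ F ≠ ⊥ →
    ∃ J : Submodule D K, J ≠ ⊥ ∧ J.FG ∧ t J = t (E ⊓ F)

/-- `D` is `⋆`-coherent. -/
def IsCoherent (t : Submodule D K → Submodule D K) : Prop :=
  ∀ E F : Submodule D K, E ≠ ⊥ → E.FG → F ≠ ⊥ → F.FG → E ⊓ F ≠ ⊥ →
    ∃ J : Submodule D K, J ≠ ⊥ ∧ J.FG ∧ t J = t E ⊓ t F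

/-- `D` is `⋆`-quasi-coherent. -/
def IsQuasiCoherent (t : Submodule D K → Submodule D K) : Prop :=
  ∀ F : Submodule D K, F ≠ ⊥ → F.FG →
    ∃ G : Submodule D K, G ≠ ⊥ ∧ G.FG ∧ t ((1 : Submodule D K) / F) = t G

/-- `D` is an `H(⋆)`-domain. -/
def IsHDomain (t : Submodule D K → Submodule D K) : Prop :=
  ∀ I : Ideal D, I ≠ ⊥ → t (idealToK I) = t 1 →
    ∃ J : Ideal D, J ≠ ⊥ ∧ J.FG ∧ J ≤ I ∧ t (idealToK J) = t 1

/-- `D` is an `I(⋆)`-domain. -/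
def IsIDomain (s : SemistarOp D K) : Prop :=
  ∀ I : Submodule D K, I ≠ ⊥ → I.FG → I ≤ 1 →
    (IsStarInvertible s.star I ↔ IsStarInvertible (finStar s.star) I)



section Aux
set_option linter.unusedSectionVars false
set_option maxHeartbeats 1000000
variable [IsDomain D] [IsFractionRing D K]

lemma one_ne_bot' : (1 : Submodule D K) ≠ ⊥ := by
  rw [Submodule.ne_bot_iff]
  exact ⟨1, one_le.mp le_rfl, one_ne_zero⟩

lemma mul_ne_bot' {E F : Submodule D K} (hE : E ≠ ⊥) (hF : F ≠ ⊥) : E * F ≠ ⊥ := by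
  rw [Submodule.ne_bot_iff] at *
  obtain ⟨e, he, he0⟩ := hE; obtain ⟨f, hf, hf0⟩ := hF
  exact ⟨e * f, Submodule.mul_mem_mul he hf, mul_ne_zero he0 hf0⟩

lemma inf_ne_bot' {E F : Submodule D K} (hE : E ≠ ⊥) (hF : F ≠ ⊥) : E ⊓ F ≠ ⊥ := by
  rw [Submodule.ne_bot_iff] at *
  obtain ⟨e, he, he0⟩ := hE; obtain ⟨f, hf, hf0⟩ := hF
  obtain ⟨⟨a, b⟩, hab⟩ := IsLocalization.surj (nonZeroDivisors D) (e * f⁻¹)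
  have hb0 : (b : D) ≠ 0 := nonZeroDivisors.ne_zero b.2
  have key : (b : D) • e = a • f := by
    have h1 : e * f⁻¹ * algebraMap D K b * f = algebraMap D K a * f := by rw [hab]
    rw [Algebra.smul_def, Algebra.smul_def]
    field_simp at h1 ⊢
    linear_combination h1
  refine ⟨(b : D) • e, ⟨E.smul_mem b he, key ▸ F.smul_mem a hf⟩, ?_⟩
  simp only [Algebra.smul_def, mul_ne_zero_iff]
  exact ⟨by simpa using (map_ne_zero_iff _ (IsFractionRing.injective D K)).mpr hb0, he0⟩

lemma mem_div_span_iff {E : Submodule D K} {T : Set K} {x : K} :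
    x ∈ E / span D T ↔ ∀ t ∈ T, x * t ∈ E := by
  rw [Submodule.mem_div_iff_forall_mul_mem]
  constructor
  · exact fun h t ht => h t (subset_span ht)
  · intro h y hy
    induction hy using Submodule.span_induction with
    | mem z hz => exact h z hz
    | zero => simpa using E.zero_mem
    | add a b _ _ ha hb => rw [mul_add]; exact E.add_mem ha hb
    | smul c a _ ha =>
        have : x * c • a = c • (x * a) := by rw [Algebra.smul_def, Algebra.smul_def]; ring
        rw [this]; exact E.smul_mem c ha

lemma div_span_singleton (E : Submodule D K) {x : K} (hx : x ≠ 0) :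
    E / span D {x} = span D {x⁻¹} * E := by
  ext y
  rw [mem_div_span_iff, Submodule.mem_span_singleton_mul]
  constructor
  · intro h
    exact ⟨y * x, h x rfl, by field_simp⟩
  · rintro ⟨m, hm, rfl⟩ t rfl
    have : t⁻¹ * m * t = m := by field_simp
    rwa [this]

lemma div_ne_bot' {E F : Submodule D K} (hE : E ≠ ⊥) (hF : F.FG) : E / F ≠ ⊥ := by
  obtain ⟨T, rfl⟩ := hF
  obtain ⟨e, he, he0⟩ := (Submodule.ne_bot_iff E).mp hE
  obtain ⟨b, hb⟩ := IsLocalization.exist_integer_multiples (nonZeroDivisors D) T (id : K → K)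
  rw [Submodule.ne_bot_iff]
  refine ⟨algebraMap D K b * e, ?_, mul_ne_zero (by simpa using (map_ne_zero_iff _ (IsFractionRing.injective D K)).mpr (nonZeroDivisors.ne_zero b.2)) he0⟩
  rw [mem_div_span_iff]
  intro t ht
  obtain ⟨d, hd⟩ := hb t ht
  have : algebraMap D K b * e * t = d • e := by
    have hd' : algebraMap D K d = algebraMap D K b * t := by simpa [Algebra.smul_def] using hd
    rw [Algebra.smul_def, hd']; ring
  rw [this]
  exact E.smul_mem d he



lemma star_ne_bot (s : SemistarOp D K) {E : Submodule D K} (hE : E ≠ ⊥) : s.star E ≠ ⊥ :=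
  fun h => hE (le_bot_iff.mp (h ▸ s.le_star E hE))

lemma one_mem_one' : (1 : K) ∈ (1 : Submodule D K) := one_le.mp le_rfl

lemma one_mem_star_one (s : SemistarOp D K) : (1 : K) ∈ s.star 1 :=
  s.le_star 1 one_ne_bot' one_mem_one'

/-- `E · F^⋆ ≤ (E·F)^⋆`. -/
lemma mul_star_le (s : SemistarOp D K) {E F : Submodule D K} (hE : E ≠ ⊥) (hF : F ≠ ⊥) :
    E * s.star F ≤ s.star (E * F) := by
  rw [Submodule.mul_le]
  intro m hm n hn
  rcases eq_or_ne m 0 with rfl | hm0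
  · simpa using (s.star (E * F)).zero_mem
  have h1 : span D {m} * F ≤ E * F :=
    mul_le_mul_left ((span_le).mpr (by simpa using hm)) _
  have h2 : span D {m} * s.star F ≤ s.star (E * F) := by
    rw [← s.star_smul_mul m hm0 F hF]
    exact s.star_mono _ _ (mul_ne_bot' (by simpa [Submodule.span_singleton_eq_bot] using hm0) hF)
      (mul_ne_bot' hE hF) h1
  exact h2 (Submodule.mul_mem_mul (Submodule.mem_span_singleton_self m) hn)

lemma star_le_of_one_mem (s : SemistarOp D K) {E : Submodule D K} (hE : E ≠ ⊥)
    (h : (1 : K) ∈ s.star E) : s.star 1 ≤ s.star E := by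
  have h1 : (1 : Submodule D K) ≤ s.star E := by
    rw [Submodule.one_eq_span, span_le]; simpa using h
  have := s.star_mono 1 (s.star E) one_ne_bot' (star_ne_bot s hE) h1
  rwa [s.star_star E hE] at this

lemma idealToK_ne_bot {I : Ideal D} (hI : I ≠ ⊥) : (idealToK I : Submodule D K) ≠ ⊥ := by
  obtain ⟨a, ha, ha0⟩ := (Submodule.ne_bot_iff I).mp hI
  rw [Submodule.ne_bot_iff]
  exact ⟨algebraMap D K a, ⟨a, ha, rfl⟩, by
    simpa using (map_ne_zero_iff _ (IsFractionRing.injective D K)).mpr ha0⟩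

lemma idealToK_le_one (I : Ideal D) : (idealToK I : Submodule D K) ≤ 1 := by
  rw [Submodule.one_eq_range]
  rintro x ⟨a, _, rfl⟩
  exact ⟨a, rfl⟩

lemma idealToK_mul (I J : Ideal D) :
    (idealToK (I * J) : Submodule D K) = idealToK I * idealToK J :=
  Submodule.map_mul I J (Algebra.ofId D K)

lemma idealToK_top : (idealToK (⊤ : Ideal D) : Submodule D K) = 1 := by
  rw [Submodule.one_eq_range, idealToK, Submodule.map_top]

lemma top_mem_starLS (s : SemistarOp D K) : (⊤ : Ideal D) ∈ starLS s :=
  ⟨top_ne_bot, by rw [idealToK_top]⟩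

lemma mul_mem_starLS (s : SemistarOp D K) {I J : Ideal D} (hI : I ∈ starLS s)
    (hJ : J ∈ starLS s) : I * J ∈ starLS s := by
  have hI' : (idealToK I : Submodule D K) ≠ ⊥ := idealToK_ne_bot hI.1
  have hJ' : (idealToK J : Submodule D K) ≠ ⊥ := idealToK_ne_bot hJ.1
  have hIJbot : I * J ≠ ⊥ := by
    intro h
    have := idealToK_mul (K := K) I J
    rw [h] at this
    exact (mul_ne_bot' hI' hJ') (by simpa [idealToK, Submodule.map_bot] using this.symm)
  refine ⟨hIJbot, ?_⟩
  rw [idealToK_mul]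
  have hle : s.star (idealToK I * idealToK J : Submodule D K) ≤ s.star 1 := by
    refine s.star_mono _ _ (mul_ne_bot' hI' hJ') one_ne_bot' ?_
    calc (idealToK I : Submodule D K) * idealToK J ≤ 1 * 1 :=
          mul_le_mul' (idealToK_le_one I) (idealToK_le_one J)
      _ = 1 := one_mul 1
  refine le_antisymm hle ?_
  have h1 : (idealToK I : Submodule D K) ≤ idealToK I * s.star (idealToK J) := by
    intro x hx
    have : x = x * 1 := (mul_one x).symm
    rw [this]
    exact Submodule.mul_mem_mul hx (hJ.2 ▸ one_mem_star_one s)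
  have h2 : (idealToK I : Submodule D K) ≤ s.star (idealToK I * idealToK J) :=
    h1.trans (mul_star_le s hI' hJ')
  have h3 := s.star_mono _ _ hI' (star_ne_bot s (mul_ne_bot' hI' hJ')) h2
  rw [s.star_star _ (mul_ne_bot' hI' hJ')] at h3
  exact hI.2 ▸ h3

lemma div_le_div_left' {E F G : Submodule D K} (h : E ≤ F) : E / G ≤ F / G := by
  intro x hx
  rw [Submodule.mem_div_iff_forall_mul_mem] at hx ⊢
  exact fun y hy => h (hx y hy)

lemma div_le_div_right' {E F G : Submodule D K} (h : F ≤ G) : E / G ≤ E / F := by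
  intro x hx
  rw [Submodule.mem_div_iff_forall_mul_mem] at hx ⊢
  exact fun y hy => hx y (h hy)

lemma mem_barStar_iff (s : SemistarOp D K) {E : Submodule D K} {x : K} :
    x ∈ barStar s E ↔ ∃ J ∈ starLS s, x ∈ E / idealToK J := by
  constructor
  · intro hx
    rw [barStar, iSup_subtype'] at hx
    have : Nonempty {J // J ∈ starLS s} := ⟨⟨⊤, top_mem_starLS s⟩⟩
    have hdir : Directed (· ≤ ·) (fun J : {J // J ∈ starLS s} => E / (idealToK J.1 : Submodule D K)) := by
      rintro ⟨J₁, h₁⟩ ⟨J₂, h₂⟩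
      refine ⟨⟨J₁ * J₂, mul_mem_starLS s h₁ h₂⟩, ?_, ?_⟩
      · refine div_le_div_right' ?_
        rw [idealToK_mul]
        calc (idealToK J₁ : Submodule D K) * idealToK J₂ ≤ idealToK J₁ * 1 :=
              mul_le_mul_right (idealToK_le_one J₂) _
          _ = idealToK J₁ := mul_one _
      · refine div_le_div_right' ?_
        rw [idealToK_mul]
        calc (idealToK J₁ : Submodule D K) * idealToK J₂ ≤ 1 * idealToK J₂ :=
              mul_le_mul_left (idealToK_le_one J₁) _
          _ = idealToK J₂ := one_mul _
    obtain ⟨⟨J, hJ⟩, hx⟩ := (Submodule.mem_iSup_of_directed _ hdir).mp hx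
    exact ⟨J, hJ, hx⟩
  · rintro ⟨J, hJ, hx⟩
    exact le_biSup (fun J => E / (idealToK J : Submodule D K)) hJ hx

lemma mem_barStar_of (s : SemistarOp D K) {E : Submodule D K} {x : K} {J : Ideal D}
    (hJ : J ∈ starLS s) (hx : x ∈ E / idealToK J) : x ∈ barStar s E :=
  (mem_barStar_iff s).mpr ⟨J, hJ, hx⟩

lemma barStar_mono {s : SemistarOp D K} {E F : Submodule D K} (h : E ≤ F) :
    barStar s E ≤ barStar s F :=
  iSup₂_mono fun _ _ => div_le_div_left' h

lemma barStar_le_star (s : SemistarOp D K) {E : Submodule D K} (hE : E ≠ ⊥) :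
    barStar s E ≤ s.star E := by
  refine iSup₂_le fun J hJ => ?_
  intro x hx
  rcases eq_or_ne x 0 with rfl | hx0
  · exact (s.star E).zero_mem
  have hJ' : (idealToK J : Submodule D K) ≠ ⊥ := idealToK_ne_bot hJ.1
  have h1 : span D {x} * idealToK J ≤ E := by
    rw [Submodule.mul_le]
    intro m hm n hn
    rw [Submodule.mem_span_singleton] at hm
    obtain ⟨c, rfl⟩ := hm
    have : c • x * n = c • (x * n) := by rw [Algebra.smul_def, Algebra.smul_def]; ring
    rw [this]
    exact E.smul_mem c ((Submodule.mem_div_iff_forall_mul_mem.mp hx) n hn)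
  have h2 : span D {x} * s.star (idealToK J) ≤ s.star E := by
    rw [← s.star_smul_mul x hx0 _ hJ']
    exact s.star_mono _ _ (mul_ne_bot' (by simpa [Submodule.span_singleton_eq_bot] using hx0) hJ') hE h1
  have hx1 : x * 1 ∈ span D {x} * s.star (idealToK J) :=
    Submodule.mul_mem_mul (Submodule.mem_span_singleton_self x) (hJ.2 ▸ one_mem_star_one s)
  rw [mul_one] at hx1
  exact h2 hx1



lemma div_idealToK_mul_left {E : Submodule D K} (I J : Ideal D) :
    E / idealToK I ≤ E / idealToK (I * J) := by
  refine div_le_div_right' ?_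
  rw [idealToK_mul]
  calc (idealToK I : Submodule D K) * idealToK J ≤ idealToK I * 1 :=
        mul_le_mul_right (idealToK_le_one J) _
    _ = idealToK I := mul_one _

lemma div_idealToK_mul_right {E : Submodule D K} (I J : Ideal D) :
    E / idealToK J ≤ E / idealToK (I * J) := by
  refine div_le_div_right' ?_
  rw [idealToK_mul]
  calc (idealToK I : Submodule D K) * idealToK J ≤ 1 * idealToK J :=
        mul_le_mul_left (idealToK_le_one I) _
    _ = idealToK J := one_mul _

/-- Stability of `⋆̄` for finite intersections. -/
lemma barStar_inf (s : SemistarOp D K) (E F : Submodule D K) :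
    barStar s (E ⊓ F) = barStar s E ⊓ barStar s F := by
  refine le_antisymm (le_inf (barStar_mono inf_le_left) (barStar_mono inf_le_right)) ?_
  rintro x ⟨hxE, hxF⟩
  obtain ⟨J₁, hJ₁, h₁⟩ := (mem_barStar_iff s).mp hxE
  obtain ⟨J₂, hJ₂, h₂⟩ := (mem_barStar_iff s).mp hxF
  refine mem_barStar_of s (mul_mem_starLS s hJ₁ hJ₂) ?_
  rw [Submodule.mem_div_iff_forall_mul_mem]
  intro y hy
  exact ⟨Submodule.mem_div_iff_forall_mul_mem.mp (div_idealToK_mul_left J₁ J₂ h₁) y hy,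
    Submodule.mem_div_iff_forall_mul_mem.mp (div_idealToK_mul_right J₁ J₂ h₂) y hy⟩

lemma exists_starLS_of_forall (s : SemistarOp D K) {E : Submodule D K} {x : K} (T : Finset K)
    (h : ∀ t ∈ T, x * t ∈ barStar s E) :
    ∃ J ∈ starLS s, ∀ t ∈ T, x * t ∈ E / idealToK J := by
  classical
  induction T using Finset.induction with
  | empty => exact ⟨⊤, top_mem_starLS s, by simp⟩
  | @insert t T ht ih =>
      obtain ⟨J, hJ, hJ'⟩ := ih (fun u hu => h u (Finset.mem_insert_of_mem hu))
      obtain ⟨J₁, hJ₁, h₁⟩ := (mem_barStar_iff s).mp (h t (Finset.mem_insert_self t T))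
      refine ⟨J₁ * J, mul_mem_starLS s hJ₁ hJ, ?_⟩
      intro u hu
      rcases Finset.mem_insert.mp hu with rfl | hu
      · exact div_idealToK_mul_left J₁ J h₁
      · exact div_idealToK_mul_right J₁ J (hJ' u hu)

/-- Stability of `⋆̄` for colons by finitely generated submodules. -/
lemma barStar_div (s : SemistarOp D K) (E : Submodule D K) {F : Submodule D K} (hF : F.FG) :
    barStar s (E / F) = barStar s E / F := by
  obtain ⟨T, rfl⟩ := hF
  refine le_antisymm ?_ ?_
  · intro x hx
    obtain ⟨J, hJ, hx⟩ := (mem_barStar_iff s).mp hx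
    rw [mem_div_span_iff]
    intro t ht
    refine mem_barStar_of s hJ ?_
    rw [Submodule.mem_div_iff_forall_mul_mem]
    intro y hy
    have : x * t * y = x * y * t := by ring
    rw [this]
    exact mem_div_span_iff.mp (Submodule.mem_div_iff_forall_mul_mem.mp hx y hy) t ht
  · intro x hx
    rw [mem_div_span_iff] at hx
    obtain ⟨J, hJ, hJ'⟩ := exists_starLS_of_forall s T (fun t ht => hx t ht)
    refine mem_barStar_of s hJ ?_
    rw [Submodule.mem_div_iff_forall_mul_mem]
    intro y hy
    rw [mem_div_span_iff]
    intro t ht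
    have : x * y * t = x * t * y := by ring
    rw [this]
    exact Submodule.mem_div_iff_forall_mul_mem.mp (hJ' t ht) y hy

lemma star_div_le (s : SemistarOp D K) {E F : Submodule D K} (hE : E ≠ ⊥) (hFfg : F.FG) :
    s.star (E / F) ≤ s.star E / F := by
  have hdiv : E / F ≠ ⊥ := div_ne_bot' hE hFfg
  intro x hx
  rw [Submodule.mem_div_iff_forall_mul_mem]
  intro f hf
  rcases eq_or_ne f 0 with rfl | hf0
  · simpa using (s.star E).zero_mem
  have h1 : span D {f} * (E / F) ≤ E := by
    rw [Submodule.mul_le]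
    intro m hm n hn
    rw [Submodule.mem_span_singleton] at hm
    obtain ⟨c, rfl⟩ := hm
    have : c • f * n = c • (n * f) := by rw [Algebra.smul_def, Algebra.smul_def]; ring
    rw [this]
    exact E.smul_mem c (Submodule.mem_div_iff_forall_mul_mem.mp hn f hf)
  have h2 : span D {f} * s.star (E / F) ≤ s.star E := by
    rw [← s.star_smul_mul f hf0 _ hdiv]
    exact s.star_mono _ _ (mul_ne_bot' (by simpa [Submodule.span_singleton_eq_bot] using hf0) hdiv) hE h1
  have : x * f = f * x := mul_comm x f
  rw [this]
  exact h2 (Submodule.mul_mem_mul (Submodule.mem_span_singleton_self f) hx)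



lemma one_fg : (1 : Submodule D K).FG := ⟨{1}, by rw [Submodule.one_eq_span]; simp⟩

/-- The key lemma: if the colon formula holds for `E`, then `E^⋆̄ = E^⋆`. -/
lemma barStar_eq_star_of_colon (s : SemistarOp D K) {E : Submodule D K} (hE : E ≠ ⊥)
    (h : ∀ x : K, x ≠ 0 →
      s.star (E / span D {x} ⊓ 1) = (s.star E / span D {x}) ⊓ s.star 1) :
    barStar s E = s.star E := by
  refine le_antisymm (barStar_le_star s hE) ?_
  intro x hx
  rcases eq_or_ne x 0 with rfl | hx0
  · exact (barStar s E).zero_mem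
  set Jk : Submodule D K := E / span D {x} ⊓ 1 with hJkdef
  obtain ⟨e, he, he0⟩ := (Submodule.ne_bot_iff E).mp hE
  obtain ⟨⟨a, b⟩, hab⟩ := IsLocalization.surj (nonZeroDivisors D) (x * e⁻¹)
  have hb0 : (b : D) ≠ 0 := nonZeroDivisors.ne_zero b.2
  have hbK : algebraMap D K b ≠ 0 := by
    simpa using (map_ne_zero_iff _ (IsFractionRing.injective D K)).mpr hb0
  have hbx : algebraMap D K b * x = a • e := by
    have h1 : x * e⁻¹ * algebraMap D K b * e = algebraMap D K a * e := by rw [hab]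
    rw [Algebra.smul_def]
    field_simp at h1 ⊢
    linear_combination h1
  have hbJk : algebraMap D K b ∈ Jk := by
    refine Submodule.mem_inf.mpr ⟨?_, ?_⟩
    · rw [mem_div_span_iff]
      rintro t rfl
      rw [hbx]
      exact E.smul_mem a he
    · rw [Submodule.one_eq_range]
      exact ⟨b, rfl⟩
  have hJkbot : Jk ≠ ⊥ :=
    (Submodule.ne_bot_iff Jk).mpr ⟨algebraMap D K b, hbJk, hbK⟩
  set J : Ideal D := Submodule.comap (Algebra.linearMap D K) Jk with hJdef
  have hJmap : (idealToK J : Submodule D K) = Jk := by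
    rw [idealToK, Submodule.map_comap_eq]
    refine inf_eq_right.mpr ?_
    rw [← Submodule.one_eq_range]
    exact inf_le_right
  have hJbot : J ≠ ⊥ := by
    rw [Submodule.ne_bot_iff]
    exact ⟨b, hbJk, hb0⟩
  have h1mem : (1 : K) ∈ s.star Jk := by
    rw [hJkdef, h x hx0]
    refine Submodule.mem_inf.mpr ⟨?_, ?_⟩
    · rw [Submodule.mem_div_iff_forall_mul_mem]
      intro y hy
      rw [Submodule.mem_span_singleton] at hy
      obtain ⟨c, rfl⟩ := hy
      rw [one_mul]
      exact (s.star E).smul_mem c hx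
    · exact one_mem_star_one s
  have hJLS : J ∈ starLS s := by
    refine ⟨hJbot, ?_⟩
    rw [hJmap]
    exact le_antisymm (s.star_mono Jk 1 hJkbot one_ne_bot' inf_le_right)
      (star_le_of_one_mem s hJkbot h1mem)
  refine mem_barStar_of s hJLS ?_
  rw [hJmap, Submodule.mem_div_iff_forall_mul_mem]
  intro y hy
  have hy' : y * x ∈ E := mem_div_span_iff.mp hy.1 x rfl
  rwa [mul_comm]

lemma finStar_eq_of_fg {t : Submodule D K → Submodule D K}
    (hmono : ∀ A B : Submodule D K, A ≠ ⊥ → B ≠ ⊥ → A ≤ B → t A ≤ t B)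
    {E : Submodule D K} (hE : E ≠ ⊥) (hfg : E.FG) : finStar t E = t E := by
  refine le_antisymm (iSup₂_le fun F hF => hmono F E hF.1 hE hF.2.2) ?_
  exact le_biSup t (show E ∈ {F : Submodule D K | F ≠ ⊥ ∧ F.FG ∧ F ≤ E} from ⟨hE, hfg, le_rfl⟩)



section Block1
variable (s : SemistarOp D K)

lemma b1_iv_to_i
    (h : ∀ E : Submodule D K, E ≠ ⊥ → E.FG → ∀ x : K, x ≠ 0 →
      s.star (E / span D {x} ⊓ 1) = (s.star E / span D {x}) ⊓ s.star 1) :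
    StarEq (finStar (barStar s)) (finStar s.star) := by
  intro E _
  exact biSup_congr fun F hF => barStar_eq_star_of_colon s hF.1 (h F hF.1 hF.2.1)

lemma b1_i_to_starbar (h : StarEq (finStar (barStar s)) (finStar s.star))
    {E : Submodule D K} (hE : E ≠ ⊥) (hfg : E.FG) : barStar s E = s.star E := by
  have h1 : finStar (barStar s) E = barStar s E :=
    finStar_eq_of_fg (fun A B _ _ hle => barStar_mono hle) hE hfg
  have h2 : finStar s.star E = s.star E := finStar_eq_of_fg s.star_mono hE hfg
  rw [← h1, ← h2, h E hE]

lemma b1_i_to_ii (h : StarEq (finStar (barStar s)) (finStar s.star)) :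
    ∀ E F : Submodule D K, E ≠ ⊥ → E.FG → F ≠ ⊥ → F.FG →
      s.star (E ⊓ F) = s.star E ⊓ s.star F := by
  intro E F hE hEfg hF hFfg
  refine le_antisymm (le_inf (s.star_mono _ _ (inf_ne_bot' hE hF) hE inf_le_left)
    (s.star_mono _ _ (inf_ne_bot' hE hF) hF inf_le_right)) ?_
  calc s.star E ⊓ s.star F = barStar s E ⊓ barStar s F := by
        rw [b1_i_to_starbar s h hE hEfg, b1_i_to_starbar s h hF hFfg]
    _ = barStar s (E ⊓ F) := (barStar_inf s E F).symm
    _ ≤ s.star (E ⊓ F) := barStar_le_star s (inf_ne_bot' hE hF)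

lemma b1_i_to_iii (h : StarEq (finStar (barStar s)) (finStar s.star)) :
    ∀ E F : Submodule D K, E ≠ ⊥ → E.FG → F ≠ ⊥ → F.FG →
      s.star (E / F ⊓ 1) = (s.star E / F) ⊓ s.star 1 := by
  intro E F hE hEfg hF hFfg
  have hdiv : E / F ≠ ⊥ := div_ne_bot' hE hFfg
  have hinf : E / F ⊓ 1 ≠ ⊥ := inf_ne_bot' hdiv one_ne_bot'
  refine le_antisymm (le_inf ?_ (s.star_mono _ _ hinf one_ne_bot' inf_le_right)) ?_
  · exact (s.star_mono _ _ hinf hdiv inf_le_left).trans (star_div_le s hE hFfg)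
  · calc (s.star E / F) ⊓ s.star 1 = (barStar s E / F) ⊓ barStar s 1 := by
          rw [b1_i_to_starbar s h hE hEfg, b1_i_to_starbar s h one_ne_bot' one_fg]
      _ = barStar s (E / F) ⊓ barStar s 1 := by rw [barStar_div s E hFfg]
      _ = barStar s (E / F ⊓ 1) := (barStar_inf s _ _).symm
      _ ≤ s.star (E / F ⊓ 1) := barStar_le_star s hinf

lemma b1_ii_to_iv
    (h : ∀ E F : Submodule D K, E ≠ ⊥ → E.FG → F ≠ ⊥ → F.FG →
      s.star (E ⊓ F) = s.star E ⊓ s.star F) :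
    ∀ E : Submodule D K, E ≠ ⊥ → E.FG → ∀ x : K, x ≠ 0 →
      s.star (E / span D {x} ⊓ 1) = (s.star E / span D {x}) ⊓ s.star 1 := by
  intro E hE hEfg x hx
  have hx' : x⁻¹ ≠ 0 := inv_ne_zero hx
  have hsb : span D {x⁻¹} ≠ ⊥ := by simpa [Submodule.span_singleton_eq_bot] using hx'
  have hE' : span D {x⁻¹} * E ≠ ⊥ := mul_ne_bot' hsb hE
  have hE'fg : (span D {x⁻¹} * E).FG := (Submodule.fg_span_singleton x⁻¹).mul hEfg
  rw [div_span_singleton E hx, div_span_singleton (s.star E) hx,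
    h _ 1 hE' hE'fg one_ne_bot' one_fg, s.star_smul_mul x⁻¹ hx' E hE]

end Block1

section Block2
variable (s : SemistarOp D K)

lemma b2_iv_to_i
    (h : ∀ E : Submodule D K, E ≠ ⊥ → ∀ x : K, x ≠ 0 →
      s.star (E / span D {x} ⊓ 1) = (s.star E / span D {x}) ⊓ s.star 1) :
    StarEq (barStar s) s.star :=
  fun E hE => barStar_eq_star_of_colon s hE (h E hE)

lemma b2_i_to_ii (h : StarEq (barStar s) s.star) :
    ∀ E F : Submodule D K, E ≠ ⊥ → F ≠ ⊥ →
      s.star (E ⊓ F) = s.star E ⊓ s.star F := by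
  intro E F hE hF
  refine le_antisymm (le_inf (s.star_mono _ _ (inf_ne_bot' hE hF) hE inf_le_left)
    (s.star_mono _ _ (inf_ne_bot' hE hF) hF inf_le_right)) ?_
  calc s.star E ⊓ s.star F = barStar s E ⊓ barStar s F := by rw [h E hE, h F hF]
    _ = barStar s (E ⊓ F) := (barStar_inf s E F).symm
    _ ≤ s.star (E ⊓ F) := barStar_le_star s (inf_ne_bot' hE hF)

lemma b2_i_to_iii (h : StarEq (barStar s) s.star) :
    ∀ E : Submodule D K, E ≠ ⊥ → ∀ F : Submodule D K, F ≠ ⊥ → F.FG →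
      s.star (E / F ⊓ 1) = (s.star E / F) ⊓ s.star 1 := by
  intro E hE F hF hFfg
  have hdiv : E / F ≠ ⊥ := div_ne_bot' hE hFfg
  have hinf : E / F ⊓ 1 ≠ ⊥ := inf_ne_bot' hdiv one_ne_bot'
  refine le_antisymm (le_inf ?_ (s.star_mono _ _ hinf one_ne_bot' inf_le_right)) ?_
  · exact (s.star_mono _ _ hinf hdiv inf_le_left).trans (star_div_le s hE hFfg)
  · calc (s.star E / F) ⊓ s.star 1 = (barStar s E / F) ⊓ barStar s 1 := by
          rw [h E hE, h 1 one_ne_bot']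
      _ = barStar s (E / F) ⊓ barStar s 1 := by rw [barStar_div s E hFfg]
      _ = barStar s (E / F ⊓ 1) := (barStar_inf s _ _).symm
      _ ≤ s.star (E / F ⊓ 1) := barStar_le_star s hinf

lemma b2_ii_to_iv
    (h : ∀ E F : Submodule D K, E ≠ ⊥ → F ≠ ⊥ →
      s.star (E ⊓ F) = s.star E ⊓ s.star F) :
    ∀ E : Submodule D K, E ≠ ⊥ → ∀ x : K, x ≠ 0 →
      s.star (E / span D {x} ⊓ 1) = (s.star E / span D {x}) ⊓ s.star 1 := by
  intro E hE x hx
  have hx' : x⁻¹ ≠ 0 := inv_ne_zero hx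
  have hsb : span D {x⁻¹} ≠ ⊥ := by simpa [Submodule.span_singleton_eq_bot] using hx'
  have hE' : span D {x⁻¹} * E ≠ ⊥ := mul_ne_bot' hsb hE
  rw [div_span_singleton E hx, div_span_singleton (s.star E) hx,
    h _ 1 hE' one_ne_bot', s.star_smul_mul x⁻¹ hx' E hE]

end Block2



end Aux

set_option maxHeartbeats 1000000 in
theorem statement7 {D K : Type*} [CommRing D] [IsDomain D] [Field K] [Algebra D K]
    [IsFractionRing D K] (s : SemistarOp D K) :
    ((StarEq (finStar (barStar s)) (finStar s.star) ↔
        ∀ E F : Submodule D K, E ≠ ⊥ → E.FG → F ≠ ⊥ → F.FG →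
          s.star (E ⊓ F) = s.star E ⊓ s.star F) ∧
      ((∀ E F : Submodule D K, E ≠ ⊥ → E.FG → F ≠ ⊥ → F.FG →
          s.star (E ⊓ F) = s.star E ⊓ s.star F) ↔
        ∀ E F : Submodule D K, E ≠ ⊥ → E.FG → F ≠ ⊥ → F.FG →
          s.star (E / F ⊓ 1) = (s.star E / F) ⊓ s.star 1) ∧
      ((∀ E F : Submodule D K, E ≠ ⊥ → E.FG → F ≠ ⊥ → F.FG →
          s.star (E / F ⊓ 1) = (s.star E / F) ⊓ s.star 1) ↔
        ∀ E : Submodule D K, E ≠ ⊥ → E.FG → ∀ x : K, x ≠ 0 →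
          s.star (E / span D {x} ⊓ 1) = (s.star E / span D {x}) ⊓ s.star 1)) ∧
    ((StarEq (barStar s) s.star ↔
        ∀ E F : Submodule D K, E ≠ ⊥ → F ≠ ⊥ →
          s.star (E ⊓ F) = s.star E ⊓ s.star F) ∧
      ((∀ E F : Submodule D K, E ≠ ⊥ → F ≠ ⊥ →
          s.star (E ⊓ F) = s.star E ⊓ s.star F) ↔
        ∀ E : Submodule D K, E ≠ ⊥ → ∀ F : Submodule D K, F ≠ ⊥ → F.FG →
          s.star (E / F ⊓ 1) = (s.star E / F) ⊓ s.star 1) ∧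
      ((∀ E : Submodule D K, E ≠ ⊥ → ∀ F : Submodule D K, F ≠ ⊥ → F.FG →
          s.star (E / F ⊓ 1) = (s.star E / F) ⊓ s.star 1) ↔
        ∀ E : Submodule D K, E ≠ ⊥ → ∀ x : K, x ≠ 0 →
          s.star (E / span D {x} ⊓ 1) = (s.star E / span D {x}) ⊓ s.star 1)) := by
  have b1_iii_to_iv : (∀ E F : Submodule D K, E ≠ ⊥ → E.FG → F ≠ ⊥ → F.FG →
      s.star (E / F ⊓ 1) = (s.star E / F) ⊓ s.star 1) →
      ∀ E : Submodule D K, E ≠ ⊥ → E.FG → ∀ x : K, x ≠ 0 →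
        s.star (E / span D {x} ⊓ 1) = (s.star E / span D {x}) ⊓ s.star 1 :=
    fun h E hE hEfg x hx =>
      h E (span D {x}) hE hEfg (by simpa [Submodule.span_singleton_eq_bot] using hx)
        (Submodule.fg_span_singleton x)
  have b2_iii_to_iv : (∀ E : Submodule D K, E ≠ ⊥ → ∀ F : Submodule D K, F ≠ ⊥ → F.FG →
      s.star (E / F ⊓ 1) = (s.star E / F) ⊓ s.star 1) →
      ∀ E : Submodule D K, E ≠ ⊥ → ∀ x : K, x ≠ 0 →
        s.star (E / span D {x} ⊓ 1) = (s.star E / span D {x}) ⊓ s.star 1 :=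
    fun h E hE x hx =>
      h E hE (span D {x}) (by simpa [Submodule.span_singleton_eq_bot] using hx)
        (Submodule.fg_span_singleton x)
  refine ⟨⟨⟨b1_i_to_ii s, fun h => b1_iv_to_i s (b1_ii_to_iv s h)⟩,
    ⟨fun h => b1_i_to_iii s (b1_iv_to_i s (b1_ii_to_iv s h)),
     fun h => b1_i_to_ii s (b1_iv_to_i s (b1_iii_to_iv h))⟩,
    ⟨b1_iii_to_iv, fun h => b1_i_to_iii s (b1_iv_to_i s h)⟩⟩,
    ⟨⟨b2_i_to_ii s, fun h => b2_iv_to_i s (b2_ii_to_iv s h)⟩,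
    ⟨fun h => b2_i_to_iii s (b2_iv_to_i s (b2_ii_to_iv s h)),
     fun h => b2_i_to_ii s (b2_iv_to_i s (b2_iii_to_iv h))⟩,
    ⟨b2_iii_to_iv, fun h => b2_i_to_iii s (b2_iv_to_i s h)⟩⟩⟩


end Semistar
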